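/- Let 1/2 ≤ ρ < 1 and z > 0. Then Re( φ(ρ, 1; z e^{πiρ}) ) = 1/(2ρ) + (1/(2π))·Im( D(z e^{2πiρ}) ), where D(w) := γ·(1/ρ − 1) + (1/ρ)·Log(−w) + Σ_{m=1}^∞ w^m Γ(ρm)/m!, γ is the Euler–Mascheroni constant, and Log denotes the principal branch of the logarithm. -/

import Mathlib

open Real Complex Filter Topology BigOperators

noncomputable section

/-- `q ^ w` where `q = exp (-s)`. -/
def qp (s : ℝ) (w : ℂ) : ℂ := Complex.exp (-(s : ℂ) * w)

/-- `(z; q)_∞` where `q = exp (-s)`. -/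
def pochInf (s : ℝ) (z : ℂ) : ℂ := ∏' m : ℕ, (1 - z * qp s (m : ℂ))

/-- `(q; q)_z` where `q = exp (-s)`. -/
def pochSub (s : ℝ) (z : ℂ) : ℂ := pochInf s (qp s 1) / pochInf s (qp s (z + 1))

/-- Jacobi theta `θ(z, q)` where `q = exp (-t)`. -/
def jtheta (t : ℝ) (z : ℂ) : ℂ := ∑' n : ℤ, (-1 : ℂ) ^ n * z ^ n * qp t ((n : ℂ) ^ 2)

/-- Andrews' series for `g_k(q)`, `q = exp (-s)`. -/
def gk (k : ℕ) (s : ℝ) : ℂ :=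
  (1 / pochInf (k * s) (qp (k * s) 1)) *
    ∑' m : ℕ, (-1 : ℂ) ^ m * qp s ((k : ℂ) * m * (m + 1) / 2) *
      pochInf ((k + 1) * s) (qp s (((k : ℂ) + 1) - k * m)) *
      jtheta (k * (k + 1) * s / 2) (qp s ((k : ℂ) * m)) / pochSub (k * s) (m : ℂ)

/-- The `q`-Gamma function, `q = exp (-t)`. -/
def qGamma (t : ℝ) (z : ℂ) : ℂ := pochSub t (z - 1) * (1 - qp t 1) ^ (1 - z)

/-- Wright's generalized Bessel function `φ(ρ, β; z)`. -/
def wrightPhi (ρ : ℝ) (β z : ℂ) : ℂ :=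
  ∑' n : ℕ, z ^ n / ((Nat.factorial n : ℂ) * Complex.Gamma (β - ρ * n))

/-- The moments `φ_j(ρ, β; z)` of the Wright function. -/
def wrightMom (j : ℕ) (ρ : ℝ) (β z : ℂ) : ℂ :=
  ∑' m : ℕ, (m : ℂ) ^ j * z ^ m / (Complex.Gamma ((m : ℂ) + 1) * Complex.Gamma (β - ρ * m))

/-- `W_j(w) = 2 Re φ_j(k/(k+1), 1; e^{-πik/(k+1)} w)`. -/
def Wk (k j : ℕ) (w : ℝ) : ℝ :=
  2 * (wrightMom j ((k : ℝ) / (k + 1)) 1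
    (Complex.exp (-(π : ℂ) * Complex.I * k / (k + 1)) * (w : ℂ))).re

/-- The coefficients `b_k(j)`. -/
def bk (k j : ℕ) : ℝ :=
  ((k : ℝ) + 1) / (k * π * Nat.factorial j) * (-1 : ℝ) ^ (j + 1) *
    Real.sin (π * j * ((k : ℝ) - 1) / k) * Real.Gamma (j * ((k : ℝ) + 1) / k)

/-- The series `𝓘_n(s)`. -/
def calI (k : ℕ) (n : ℤ) (s : ℝ) : ℂ :=
  ∑' m : ℕ, (-1 : ℂ) ^ m * Complex.exp ((π : ℂ) * Complex.I * m * n / (k + 1)) *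
    qp s ((k : ℂ) * m * (m + 1) / 2 - k * m ^ 2 / (2 * ((k : ℂ) + 1))) /
    (pochSub (k * s) (m : ℂ) * pochSub ((k + 1) * s) (-((k : ℂ) * m) / (k + 1)))

/-- The relative error `R_k(q)`, `q = exp (-s)`. -/
def Rk (k : ℕ) (s : ℝ) : ℂ :=
  gk k s * (pochInf (k * s) (qp (k * s) 1) / pochInf ((k + 1) * s) (qp ((k + 1) * s) 1)) *
    (Real.sqrt (k * (k + 1) * s / (2 * π)) : ℂ) *
    (Real.exp (π ^ 2 / (2 * k * (k + 1) * s)) : ℂ)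

/-- The entire function `h_q(z)`. -/
def hq (k : ℕ) (s : ℝ) (z : ℂ) : ℂ :=
  qp s ((k : ℂ) ^ 2 * z ^ 2 / (2 * ((k : ℂ) + 1)) + k * z / 2) *
    (Complex.Gamma (z + 1) * Complex.Gamma (1 - k * z / ((k : ℂ) + 1))) /
    (qGamma (k * s) (z + 1) * qGamma ((k + 1) * s) (1 - k * z / ((k : ℂ) + 1))) *
    ((1 - qp s ((k : ℂ) + 1)) / (((k : ℂ) + 1) * s)) ^ ((k : ℂ) * z / ((k : ℂ) + 1)) *
    (((k : ℂ) * s) / (1 - qp s (k : ℂ))) ^ z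

/-- The Euler product `(q; q)_∞ = ∏ (1 - q^m)` as a real number, `q = exp (-t)`. -/
def eulerR (t : ℝ) : ℝ := ∏' m : ℕ, (1 - Real.exp (-t * (m + 1)))

lemma gautschi {ρ : ℝ} (hρ0 : 0 < ρ) (hρ1 : ρ < 1) {y : ℝ} (hy : 0 < y) :
    Real.Gamma (y + ρ) ≤ Real.Gamma y * y ^ ρ := by
  have h := Real.convexOn_log_Gamma.2 (Set.mem_Ioi.2 hy)
    (Set.mem_Ioi.2 (by linarith : (0:ℝ) < y + 1))
    (by linarith : (0:ℝ) ≤ 1 - ρ) hρ0.le (by ring)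
  simp only [smul_eq_mul, Function.comp] at h
  have e1 : (1 - ρ) * y + ρ * (y + 1) = y + ρ := by ring
  rw [e1] at h
  have hg : 0 < Real.Gamma y := Real.Gamma_pos_of_pos hy
  have hg1 : Real.Gamma (y + 1) = y * Real.Gamma y := Real.Gamma_add_one hy.ne'
  calc Real.Gamma (y + ρ)
      = Real.exp (Real.log (Real.Gamma (y + ρ))) :=
        (Real.exp_log (Real.Gamma_pos_of_pos (by linarith))).symm
    _ ≤ Real.exp ((1 - ρ) * Real.log (Real.Gamma y) + ρ * Real.log (Real.Gamma (y + 1))) :=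
        Real.exp_le_exp.2 h
    _ = Real.Gamma y * y ^ ρ := by
        rw [hg1, Real.log_mul hy.ne' hg.ne']
        have : (1 - ρ) * Real.log (Real.Gamma y) + ρ * (Real.log y + Real.log (Real.Gamma y))
            = Real.log (Real.Gamma y) + Real.log y * ρ := by ring
        rw [this, Real.exp_add, Real.exp_log hg, Real.rpow_def_of_pos hy]

lemma summable_gamma_series {ρ : ℝ} (hρ0 : 0 < ρ) (hρ1 : ρ < 1) {x : ℝ} (hx : 0 ≤ x) :
    Summable (fun n : ℕ => x ^ n * Real.Gamma (ρ * n) / n.factorial) := by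
  apply summable_of_ratio_norm_eventually_le (r := 1/2) (by norm_num)
  have t1 : Tendsto (fun n : ℕ => (n : ℝ) ^ (ρ - 1)) atTop (𝓝 0) := by
    have h0 := tendsto_rpow_neg_atTop (y := 1 - ρ) (by linarith)
    have := h0.comp (tendsto_natCast_atTop_atTop (R := ℝ))
    simpa [neg_sub, Function.comp_def] using this
  have t2 : ∀ᶠ n : ℕ in atTop, (n : ℝ) ^ (ρ - 1) ≤ 1 / (2 * (x + 1)) :=
    t1.eventually (eventually_le_nhds (by positivity))
  filter_upwards [t2, eventually_ge_atTop 1] with n hb hn1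
  have hn0 : (0:ℝ) < n := by exact_mod_cast hn1
  have hΓpos : 0 ≤ Real.Gamma (ρ * n) := Real.Gamma_nonneg_of_nonneg (by positivity)
  have hΓ1 : Real.Gamma (ρ * (n + 1)) ≤ Real.Gamma (ρ * n) * (ρ * n) ^ ρ := by
    have := gautschi hρ0 hρ1 (y := ρ * n) (by positivity)
    have e : ρ * ((n:ℝ) + 1) = ρ * n + ρ := by ring
    rw [e]; exact this
  have hΓ2 : (ρ * n : ℝ) ^ ρ ≤ (n : ℝ) ^ ρ :=
    Real.rpow_le_rpow (by positivity) (by nlinarith) hρ0.le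
  have hΓ3 : (n : ℝ) ^ ρ = (n : ℝ) ^ (ρ - 1) * n := by
    rw [← Real.rpow_add_one hn0.ne' (ρ - 1), sub_add_cancel]
  have hΓ4 : Real.Gamma (ρ * (n + 1)) ≤ Real.Gamma (ρ * n) * ((n : ℝ) / (2 * (x + 1))) := by
    calc Real.Gamma (ρ * (n + 1)) ≤ Real.Gamma (ρ * n) * (ρ * n) ^ ρ := hΓ1
      _ ≤ Real.Gamma (ρ * n) * ((n : ℝ) ^ (ρ - 1) * n) := by
          rw [← hΓ3]; exact mul_le_mul_of_nonneg_left hΓ2 hΓpos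
      _ ≤ Real.Gamma (ρ * n) * ((n : ℝ) / (2 * (x + 1))) := by
          apply mul_le_mul_of_nonneg_left _ hΓpos
          calc (n : ℝ) ^ (ρ - 1) * n ≤ 1 / (2 * (x + 1)) * n :=
                mul_le_mul_of_nonneg_right hb hn0.le
            _ = (n : ℝ) / (2 * (x + 1)) := by ring
  rw [Real.norm_of_nonneg (by positivity), Real.norm_of_nonneg (by positivity)]
  have hfpos : (0:ℝ) < n.factorial := by positivity
  push_cast [Nat.factorial_succ]
  rw [div_le_iff₀ (by positivity)]
  have key : x ^ (n+1) * (Real.Gamma (ρ * n) * ((n:ℝ) / (2 * (x + 1))))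
      ≤ 1 / 2 * (x ^ n * Real.Gamma (ρ * n) / ↑n.factorial) * ((n+1) * n.factorial) := by
    have hxn : (0:ℝ) ≤ x ^ n := by positivity
    have h5 : x * (n:ℝ) / (2 * (x+1)) ≤ 1/2 * (n+1) := by
      rw [div_le_iff₀ (by positivity)]
      nlinarith
    calc x ^ (n+1) * (Real.Gamma (ρ * n) * ((n:ℝ) / (2 * (x + 1))))
        = (x ^ n * Real.Gamma (ρ * n)) * (x * n / (2 * (x+1))) := by rw [pow_succ]; ring
      _ ≤ (x ^ n * Real.Gamma (ρ * n)) * (1/2 * (n+1)) := by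
          exact mul_le_mul_of_nonneg_left h5 (by positivity)
      _ = 1 / 2 * (x ^ n * Real.Gamma (ρ * n) / ↑n.factorial) * ((n+1) * n.factorial) := by
          field_simp
  calc x ^ (n+1) * Real.Gamma (ρ * ((n:ℝ)+1)) ≤ x ^ (n+1) * (Real.Gamma (ρ * n) * ((n:ℝ) / (2 * (x + 1)))) :=
        mul_le_mul_of_nonneg_left hΓ4 (by positivity)
    _ ≤ 1 / 2 * (x ^ n * Real.Gamma (ρ * n) / ↑n.factorial) * (((n:ℝ)+1) * n.factorial) := key

lemma one_div_Gamma_one_sub {s : ℝ} (hs : 0 < s) :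
    1 / Real.Gamma (1 - s) = Real.Gamma s * Real.sin (π * s) / π := by
  rcases eq_or_ne (Real.sin (π * s)) 0 with h | h
  · obtain ⟨n, hn⟩ := Real.sin_eq_zero_iff.mp h
    have hπ : (π : ℝ) ≠ 0 := Real.pi_ne_zero
    have hsn : s = n := by
      have := mul_left_cancel₀ Real.pi_ne_zero (show π * (n:ℝ) = π * s by linear_combination hn)
      linarith
    have hn1 : 1 ≤ n := by
      by_contra hc
      push_neg at hc
      have : (n : ℝ) ≤ 0 := by exact_mod_cast Int.lt_add_one_iff.mp (by omega)
      linarith [hsn ▸ hs]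
    have : (1 : ℝ) - s = -((n - 1).toNat : ℝ) := by
      rw [hsn]
      have : ((n - 1).toNat : ℝ) = (n : ℝ) - 1 := by
        exact_mod_cast Int.toNat_of_nonneg (by omega)
      rw [this]; ring
    rw [this, Real.Gamma_neg_nat_eq_zero, h]
    simp
  · have h2 := Real.Gamma_mul_Gamma_one_sub s
    have hΓ : Real.Gamma s ≠ 0 := (Real.Gamma_pos_of_pos hs).ne'
    have hΓ1 : Real.Gamma (1 - s) ≠ 0 := by
      intro h0
      rw [h0, mul_zero] at h2
      have : (π : ℝ) ≠ 0 := Real.pi_ne_zero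
      rw [eq_comm, div_eq_zero_iff] at h2
      tauto
    have h3 : Real.Gamma s * Real.Gamma (1 - s) * Real.sin (π * s) = π := by
      rw [h2]; field_simp
    rw [div_eq_div_iff hΓ1 Real.pi_ne_zero]
    linear_combination -h3

set_option maxHeartbeats 2000000 in
/-- `Re φ(ρ, 1; z e^{πiρ}) = 1/(2ρ) + (1/(2π)) Im D(z e^{2πiρ})`, where
`D(w) = γ(1/ρ - 1) + (1/ρ) Log(-w) + Σ_{m≥1} w^m Γ(ρm)/m!`. -/
theorem wright_real_part_eq (ρ : ℝ) (h1 : 1 / 2 ≤ ρ) (h2 : ρ < 1) (z : ℝ) (hz : 0 < z) :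
    (wrightPhi ρ 1 ((z : ℂ) * Complex.exp ((π : ℂ) * Complex.I * ρ))).re =
      1 / (2 * ρ) + 1 / (2 * π) *
        (((Real.eulerMascheroniConstant : ℂ) * (1 / ρ - 1) : ℂ) +
          (1 / (ρ : ℂ)) * Complex.log (-((z : ℂ) * Complex.exp (2 * (π : ℂ) * Complex.I * ρ))) +
          ∑' m : ℕ, ((z : ℂ) * Complex.exp (2 * (π : ℂ) * Complex.I * ρ)) ^ (m + 1) *
            Complex.Gamma ((ρ : ℂ) * (m + 1)) / (Nat.factorial (m + 1) : ℂ)).im := by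
  have hπ : (0:ℝ) < π := Real.pi_pos
  have hρ0 : 0 < ρ := by linarith
  -- real coefficient sequence
  set c : ℕ → ℝ := fun n => z ^ n * Real.Gamma (ρ * n) * Real.sin (2 * π * ρ * n) / n.factorial
    with hc
  set f : ℕ → ℂ := fun n => ((z : ℂ) * Complex.exp ((π : ℂ) * Complex.I * ρ)) ^ n /
      ((n.factorial : ℂ) * Complex.Gamma (1 - (ρ : ℂ) * n)) with hfdef
  -- rewrite f into polar form
  have hfre : ∀ n : ℕ, f n = ((z ^ n / (n.factorial * Real.Gamma (1 - ρ * n)) : ℝ) : ℂ) *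
      Complex.exp (((π * ρ * n : ℝ) : ℂ) * Complex.I) := by
    intro n
    have hg : Complex.Gamma (1 - (ρ : ℂ) * n) = ((Real.Gamma (1 - ρ * n) : ℝ) : ℂ) := by
      rw [show (1 - (ρ : ℂ) * n) = (((1 - ρ * n : ℝ)) : ℂ) by push_cast; ring,
        Complex.Gamma_ofReal]
    have he : ((z : ℂ) * Complex.exp ((π : ℂ) * Complex.I * ρ)) ^ n
        = (z : ℂ) ^ n * Complex.exp (((π * ρ * n : ℝ) : ℂ) * Complex.I) := by
      rw [mul_pow, ← Complex.exp_nat_mul]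
      push_cast
      ring_nf
    rw [hfdef]
    simp only []
    rw [he, hg]
    push_cast
    rw [mul_div_right_comm]
  -- summability of the Wright series
  have hsum_f : Summable f := by
    rw [← summable_nat_add_iff 1]
    apply Summable.of_norm_bounded
      (g := fun n : ℕ => z ^ (n + 1) * Real.Gamma (ρ * (n + 1 : ℕ)) / ((n + 1).factorial) / π)
    · exact ((summable_nat_add_iff 1).mpr
        (summable_gamma_series hρ0 h2 hz.le)).div_const π
    · intro n
      rw [hfre (n + 1), norm_mul]
      rw [Complex.norm_exp_ofReal_mul_I,
        Complex.norm_real, Real.norm_eq_abs, mul_one]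
      have hs : (0:ℝ) < ρ * ((n + 1 : ℕ) : ℝ) := by positivity
      have e1 : z ^ (n+1) / (((n+1).factorial : ℝ) * Real.Gamma (1 - ρ * ((n+1:ℕ):ℝ)))
          = (z ^ (n+1) / ((n+1).factorial : ℝ)) * (1 / Real.Gamma (1 - ρ * ((n+1:ℕ):ℝ))) := by
        ring
      rw [e1, abs_mul,
        _root_.abs_of_nonneg (show (0:ℝ) ≤ z ^ (n+1) / ((n+1).factorial : ℝ) by positivity),
        one_div_Gamma_one_sub hs]
      have hb : |Real.Gamma (ρ * ((n+1:ℕ):ℝ)) * Real.sin (π * (ρ * ((n+1:ℕ):ℝ))) / π|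
          ≤ Real.Gamma (ρ * ((n+1:ℕ):ℝ)) / π := by
        rw [abs_div, _root_.abs_of_pos hπ, abs_mul,
          _root_.abs_of_nonneg (Real.Gamma_nonneg_of_nonneg hs.le)]
        refine (div_le_div_iff_of_pos_right hπ).mpr ?_
        have := mul_le_mul_of_nonneg_left (Real.abs_sin_le_one (π * (ρ * ((n+1:ℕ):ℝ))))
          (Real.Gamma_nonneg_of_nonneg hs.le)
        simpa using this
      calc z ^ (n+1) / ((n+1).factorial : ℝ) *
            |Real.Gamma (ρ * ((n+1:ℕ):ℝ)) * Real.sin (π * (ρ * ((n+1:ℕ):ℝ))) / π|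
          ≤ z ^ (n+1) / ((n+1).factorial : ℝ) * (Real.Gamma (ρ * ((n+1:ℕ):ℝ)) / π) := by
            exact mul_le_mul_of_nonneg_left hb (by positivity)
        _ = z ^ (n + 1) * Real.Gamma (ρ * (n + 1 : ℕ)) / ((n + 1).factorial) / π := by
            ring
  -- real part of each term
  have hterm : ∀ n : ℕ, (f (n + 1)).re = c (n + 1) / (2 * π) := by
    intro n
    rw [hfre (n + 1), Complex.re_ofReal_mul, Complex.exp_ofReal_mul_I_re]
    have hs : (0:ℝ) < ρ * ((n + 1 : ℕ) : ℝ) := by positivity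
    have e1 : z ^ (n+1) / (((n+1).factorial : ℝ) * Real.Gamma (1 - ρ * ((n+1:ℕ):ℝ)))
        = (z ^ (n+1) / ((n+1).factorial : ℝ)) * (1 / Real.Gamma (1 - ρ * ((n+1:ℕ):ℝ))) := by
      ring
    rw [e1, one_div_Gamma_one_sub hs]
    have e2 : Real.sin (2 * π * ρ * ((n+1:ℕ):ℝ))
        = 2 * Real.sin (π * (ρ * ((n+1:ℕ):ℝ))) * Real.cos (π * (ρ * ((n+1:ℕ):ℝ))) := by
      rw [show 2 * π * ρ * ((n+1:ℕ):ℝ) = 2 * (π * (ρ * ((n+1:ℕ):ℝ))) by ring, Real.sin_two_mul]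
    have e3 : π * ρ * ((n+1:ℕ):ℝ) = π * (ρ * ((n+1:ℕ):ℝ)) := by ring
    rw [hc]
    simp only []
    rw [e2, e3]
    have hfa : ((n+1).factorial : ℝ) ≠ 0 := by positivity
    field_simp
  -- the left-hand side
  have hLHS : (wrightPhi ρ 1 ((z : ℂ) * Complex.exp ((π : ℂ) * Complex.I * ρ))).re
      = 1 + (∑' n : ℕ, c (n + 1)) / (2 * π) := by
    have hphi : wrightPhi ρ 1 ((z:ℂ) * Complex.exp ((π:ℂ) * Complex.I * ρ)) = ∑' n, f n := by
      rw [wrightPhi, hfdef]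
    have h0 : (f 0).re = 1 := by
      rw [hfdef]
      simp [Complex.Gamma_one]
    rw [hphi, Complex.re_tsum hsum_f,
      Summable.tsum_eq_zero_add (Complex.hasSum_re hsum_f.hasSum).summable, h0]
    congr 1
    calc ∑' n : ℕ, (f (n+1)).re = ∑' n : ℕ, c (n+1) / (2*π) := tsum_congr hterm
      _ = (∑' n : ℕ, c (n + 1)) / (2 * π) := by rw [tsum_div_const]
  -- the logarithm
  have hlog : (Complex.log (-((z : ℂ) * Complex.exp (2 * (π : ℂ) * Complex.I * ρ)))).im
      = 2 * π * ρ - π := by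
    have hexp : -((z : ℂ) * Complex.exp (2 * (π : ℂ) * Complex.I * ρ))
        = (z : ℂ) * Complex.exp (((2 * π * ρ - π : ℝ) : ℂ) * Complex.I) := by
      have e : (((2 * π * ρ - π : ℝ) : ℂ) * Complex.I)
          = 2 * (π : ℂ) * Complex.I * ρ - (π : ℂ) * Complex.I := by push_cast; ring
      rw [e, Complex.exp_sub, Complex.exp_pi_mul_I, div_neg, div_one]
      ring
    have hmem : 2 * π * ρ - π ∈ Set.Ioc (-π) (-π + 2 * π) := by
      constructor <;> nlinarith
    rw [hexp, Complex.log_im, Complex.arg_real_mul _ hz, Complex.arg_exp_mul_I,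
      (toIocMod_eq_self _).mpr hmem]
  -- imaginary parts of the constants
  have hA : (((Real.eulerMascheroniConstant : ℂ) * (1 / (ρ:ℂ) - 1))).im = 0 := by
    have e : (1 / (ρ:ℂ) - 1) = (((1/ρ - 1 : ℝ)) : ℂ) := by push_cast; ring
    rw [e, ← Complex.ofReal_mul, Complex.ofReal_im]
  have hB : ((1 / (ρ : ℂ)) *
      Complex.log (-((z : ℂ) * Complex.exp (2 * (π : ℂ) * Complex.I * ρ)))).im
      = (1/ρ) * (2 * π * ρ - π) := by
    rw [show (1/(ρ:ℂ)) = ((1/ρ : ℝ) : ℂ) by push_cast; ring, Complex.im_ofReal_mul, hlog]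
  -- the D-series
  have hgre : ∀ m : ℕ, ((z : ℂ) * Complex.exp (2 * (π : ℂ) * Complex.I * ρ)) ^ (m + 1) *
        Complex.Gamma ((ρ : ℂ) * (m + 1)) / ((m + 1).factorial : ℂ)
      = ((z ^ (m+1) * Real.Gamma (ρ * ((m+1:ℕ):ℝ)) / ((m+1).factorial) : ℝ) : ℂ)
        * Complex.exp (((2 * π * ρ * ((m+1:ℕ):ℝ) : ℝ) : ℂ) * Complex.I) := by
    intro m
    have hg : Complex.Gamma ((ρ:ℂ) * ((m:ℂ) + 1)) = ((Real.Gamma (ρ * ((m+1:ℕ):ℝ)) : ℝ) : ℂ) := by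
      rw [show ((ρ:ℂ) * ((m:ℂ)+1)) = ((ρ * ((m+1:ℕ):ℝ) : ℝ) : ℂ) by push_cast; ring,
        Complex.Gamma_ofReal]
    have he : ((z:ℂ) * Complex.exp (2 * (π:ℂ) * Complex.I * ρ)) ^ (m+1)
        = (z:ℂ)^(m+1) * Complex.exp (((2*π*ρ*((m+1:ℕ):ℝ) : ℝ):ℂ) * Complex.I) := by
      rw [mul_pow, ← Complex.exp_nat_mul]
      push_cast
      ring_nf
    rw [he, hg]
    push_cast
    ring
  have hsum_g : Summable (fun m : ℕ => ((z : ℂ) * Complex.exp (2 * (π : ℂ) * Complex.I * ρ)) ^ (m + 1) *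
      Complex.Gamma ((ρ : ℂ) * (m + 1)) / ((m + 1).factorial : ℂ)) := by
    apply Summable.of_norm_bounded
      (g := fun m : ℕ => z ^ (m+1) * Real.Gamma (ρ * ((m+1:ℕ):ℝ)) / ((m+1).factorial : ℝ))
    · exact (summable_nat_add_iff 1).mpr (summable_gamma_series hρ0 h2 hz.le)
    · intro m
      rw [hgre m, norm_mul,
        Complex.norm_exp_ofReal_mul_I, Complex.norm_real, Real.norm_eq_abs, mul_one]
      exact le_of_eq (_root_.abs_of_nonneg (by positivity))
  have him : (∑' m : ℕ, ((z : ℂ) * Complex.exp (2 * (π : ℂ) * Complex.I * ρ)) ^ (m + 1) *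
        Complex.Gamma ((ρ : ℂ) * (m + 1)) / ((m + 1).factorial : ℂ)).im
      = ∑' m : ℕ, c (m + 1) := by
    rw [Complex.im_tsum hsum_g]
    refine tsum_congr fun m => ?_
    rw [hgre m, Complex.im_ofReal_mul, Complex.exp_ofReal_mul_I_im]
    rw [hc]
    simp only []
    ring
  rw [hLHS, Complex.add_im, Complex.add_im, hA, hB, him]
  have hρ0' : ρ ≠ 0 := hρ0.ne'
  have hπ' : π ≠ 0 := Real.pi_ne_zero
  field_simp
  ring

end
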